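/- Fix λ ∈ (0,1]. For every real number q > 0, the minimum of q + 1 + 1/λ and 1/(λ·q) is at most (√(λ² + 6λ + 1) + λ + 1)/(2λ), with equality at q = (√(λ² + 6λ + 1) − λ − 1)/(2λ). -/

import Mathlib

theorem stmt_5 (lam : ℝ) (h0 : 0 < lam) (h1 : lam ≤ 1) :
    (∀ q : ℝ, 0 < q →
      min (q + 1 + 1 / lam) (1 / (lam * q)) ≤
        (Real.sqrt (lam ^ 2 + 6 * lam + 1) + lam + 1) / (2 * lam)) ∧
    min ((Real.sqrt (lam ^ 2 + 6 * lam + 1) - lam - 1) / (2 * lam) + 1 + 1 / lam)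
        (1 / (lam * ((Real.sqrt (lam ^ 2 + 6 * lam + 1) - lam - 1) / (2 * lam)))) =
      (Real.sqrt (lam ^ 2 + 6 * lam + 1) + lam + 1) / (2 * lam) := by
  set s := Real.sqrt (lam ^ 2 + 6 * lam + 1) with hs
  have hnn : (0:ℝ) ≤ lam ^ 2 + 6 * lam + 1 := by nlinarith
  have hsq : s ^ 2 = lam ^ 2 + 6 * lam + 1 := Real.sq_sqrt hnn
  have hsnn : 0 ≤ s := Real.sqrt_nonneg _
  have hsgt : lam + 1 < s := by nlinarith
  set Q := (s - lam - 1) / (2 * lam) with hQ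
  have hQpos : 0 < Q := div_pos (by linarith) (by linarith)
  have ha : Q + 1 + 1 / lam = (s + lam + 1) / (2 * lam) := by
    rw [hQ]; field_simp; ring
  have hb : 1 / (lam * Q) = (s + lam + 1) / (2 * lam) := by
    rw [hQ]
    have h2 : lam * ((s - lam - 1) / (2 * lam)) = (s - lam - 1) / 2 := by
      field_simp
    rw [h2]
    rw [div_eq_div_iff (by linarith) (by linarith)]
    nlinarith
  constructor
  · intro q hq
    rcases le_total q Q with h | h
    · exact le_trans (min_le_left _ _) (by rw [← ha]; linarith)
    · refine le_trans (min_le_right _ _) ?_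
      rw [← hb]
      apply one_div_le_one_div_of_le (by positivity)
      nlinarith
  · rw [ha, hb, min_self]
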